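/- Let Y be a random variable taking values in a finite set 𝒴, let X_1, …, X_D and Y⁻ be random vectors with values in finite-dimensional Euclidean spaces on a common probability space, and let ε = P( Y ≠ argmax_{y ∈ 𝒴} P(Y = y ∣ X_1, …, X_D, Y⁻) ) be the irreducible Bayes error. Let A ⊆ {1,…,D} be a subset of selected features satisfying I(Y; X_A ∣ Y⁻) ≥ Δ² / 2. Then inf over all measurable classifiers g with values in 𝒴 of P( Y ≠ g(X_A, Y⁻) ) ≤ ε + √( 2 · I(Y; X_{\{1,…,D\}} ∣ Y⁻) − Δ² ). -/

import Mathlib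

open MeasureTheory ProbabilityTheory Real
open scoped ENNReal Classical
set_option maxHeartbeats 2000000

/-- Kullback–Leibler divergence between two measures (`∞` if `μ` is not absolutely
continuous w.r.t. `ν` or the log-likelihood ratio is not `μ`-integrable). -/
noncomputable def klDiv {α : Type*} [MeasurableSpace α] (μ ν : Measure α) : ℝ≥0∞ :=
  open scoped Classical in
  if μ ≪ ν ∧ Integrable (llr μ ν) μ then ENNReal.ofReal (∫ x, llr μ ν x ∂μ) else ∞

/-- Conditional mutual information `I(U; V ∣ Z)`: the expectation, over `(V, Z)`, of the
KL divergence between the regular conditional law of `U` given `(V, Z)` and the regular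
conditional law of `U` given `Z`. -/
noncomputable def cmi {Ω α β γ : Type*} [MeasurableSpace Ω]
    [MeasurableSpace α] [StandardBorelSpace α] [Nonempty α]
    [MeasurableSpace β] [MeasurableSpace γ]
    (μ : Measure Ω) [IsFiniteMeasure μ] (U : Ω → α) (V : Ω → β) (Z : Ω → γ) : ℝ≥0∞ :=
  ∫⁻ ω, klDiv (condDistrib U (fun ω' => (V ω', Z ω')) μ (V ω, Z ω)) (condDistrib U Z μ (Z ω)) ∂μ

/-- The tuple of the features with indices in `S`. -/
noncomputable def featTuple {Ω : Type*} {D : ℕ} {d : Fin D → ℕ}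
    (X : (i : Fin D) → Ω → (Fin (d i) → ℝ)) (S : Finset (Fin D)) (ω : Ω) :
    (i : S) → Fin (d i.1) → ℝ :=
  fun i => X i.1 ω

/-- The element of a finite nonempty type maximizing `f`. -/
noncomputable def argmaxFin {𝒴 : Type*} [Fintype 𝒴] [Nonempty 𝒴] (f : 𝒴 → ℝ) : 𝒴 :=
  (Finset.exists_max_image Finset.univ f Finset.univ_nonempty).choose

section ArgMax
variable {𝒴 : Type*} [Fintype 𝒴] [Nonempty 𝒴]

private lemma exists_choose_congr {α : Sort*} {p q : α → Prop} (h : p = q)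
    (hp : ∃ a, p a) (hq : ∃ a, q a) : hp.choose = hq.choose := by subst h; rfl

lemma argmaxFin_spec (f : 𝒴 → ℝ) (y : 𝒴) : f y ≤ f (argmaxFin f) :=
  (Finset.exists_max_image Finset.univ f Finset.univ_nonempty).choose_spec.2 y (Finset.mem_univ y)

lemma argmaxFin_congr {f g : 𝒴 → ℝ} (h : ∀ b, (∀ b', f b' ≤ f b) ↔ (∀ b', g b' ≤ g b)) :
    argmaxFin f = argmaxFin g := by
  unfold argmaxFin
  refine exists_choose_congr (funext fun b => propext ?_) _ _
  constructor
  · rintro ⟨-, hb⟩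
    exact ⟨Finset.mem_univ _, fun b' _ => (h b).1 (fun b'' => hb b'' (Finset.mem_univ _)) b'⟩
  · rintro ⟨-, hb⟩
    exact ⟨Finset.mem_univ _, fun b' _ => (h b).2 (fun b'' => hb b'' (Finset.mem_univ _)) b'⟩

/-- canonical selection from the maximizer set -/
noncomputable def argmaxSel (M : Finset 𝒴) : 𝒴 :=
  argmaxFin (fun y => if y ∈ M then (1 : ℝ) else 0)

lemma argmaxFin_eq_sel (f : 𝒴 → ℝ) :
    argmaxFin f = argmaxSel (Finset.univ.filter (fun y => ∀ z, f z ≤ f y)) := by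
  set M := Finset.univ.filter (fun y => ∀ z, f z ≤ f y) with hM
  have hmem : ∀ y, y ∈ M ↔ ∀ z, f z ≤ f y := by
    intro y; simp [hM]
  have hMne : argmaxFin f ∈ M := (hmem _).2 (fun z => argmaxFin_spec f z)
  apply argmaxFin_congr
  intro b; constructor
  · intro hb b'
    have hbM : b ∈ M := (hmem b).2 hb
    rw [if_pos hbM]
    split <;> norm_num
  · intro hb
    have h1 : (if argmaxFin f ∈ M then (1:ℝ) else 0) ≤ (if b ∈ M then (1:ℝ) else 0) :=
      hb (argmaxFin f)
    rw [if_pos hMne] at h1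
    have hbM : b ∈ M := by by_contra hc; rw [if_neg hc] at h1; norm_num at h1
    exact (hmem b).1 hbM

lemma measurable_argmaxFin {β : Type*} [MeasurableSpace β] [MeasurableSpace 𝒴] {κ : β → 𝒴 → ℝ}
    (hκ : ∀ y, Measurable (fun b => κ b y)) :
    Measurable (fun b => argmaxFin (κ b)) := by
  have hrw : (fun b => argmaxFin (κ b)) =
      (fun b => argmaxSel (Finset.univ.filter (fun y => ∀ z, κ b z ≤ κ b y))) :=
    funext fun b => argmaxFin_eq_sel _
  rw [hrw]
  apply measurable_to_countable'
  intro y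
  have hset : (fun b => argmaxSel (Finset.univ.filter (fun y' => ∀ z, κ b z ≤ κ b y'))) ⁻¹' {y}
      = ⋃ M ∈ {M : Finset 𝒴 | argmaxSel M = y},
          {b | ∀ y', (∀ z, κ b z ≤ κ b y') ↔ y' ∈ M} := by
    ext b
    simp only [Set.mem_preimage, Set.mem_singleton_iff, Set.mem_iUnion, Set.mem_setOf_eq]
    constructor
    · intro hb
      refine ⟨Finset.univ.filter (fun y' => ∀ z, κ b z ≤ κ b y'), hb, fun y' => ?_⟩
      simp
    · rintro ⟨M, hMy, hM⟩
      have : Finset.univ.filter (fun y' => ∀ z, κ b z ≤ κ b y') = M := by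
        ext y'; simpa using hM y'
      rw [this]; exact hMy
  rw [hset]
  refine MeasurableSet.biUnion (Set.to_countable _) (fun M _ => ?_)
  have hrw2 : {b | ∀ y', (∀ z, κ b z ≤ κ b y') ↔ y' ∈ M} =
      ⋂ y', ((⋂ z, {b | κ b z ≤ κ b y'}) ∩ {b | y' ∈ M}) ∪
            ((⋃ z, {b | κ b z ≤ κ b y'}ᶜ) ∩ {b | y' ∉ M}) := by
    ext b
    simp only [Set.mem_setOf_eq, Set.mem_iInter, Set.mem_union, Set.mem_inter_iff,
      Set.mem_iUnion, Set.mem_compl_iff]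
    constructor
    · intro h y'
      by_cases hy' : y' ∈ M
      · exact Or.inl ⟨fun z => (h y').2 hy' z, hy'⟩
      · refine Or.inr ⟨?_, hy'⟩
        by_contra hc; push_neg at hc
        exact hy' ((h y').1 hc)
    · intro h y'
      rcases h y' with ⟨h1, h2⟩ | ⟨⟨z, hz⟩, h2⟩
      · exact ⟨fun _ => h2, fun _ z => h1 z⟩
      · exact ⟨fun hc => absurd (hc z) hz, fun hc => absurd hc h2⟩
  rw [hrw2]
  refine MeasurableSet.iInter (fun y' => MeasurableSet.union ?_ ?_)
  · exact (MeasurableSet.iInter fun z => measurableSet_le (hκ z) (hκ y')).inter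
      (MeasurableSet.const _)
  · exact (MeasurableSet.iUnion fun z => (measurableSet_le (hκ z) (hκ y')).compl).inter
      (MeasurableSet.const _)

end ArgMax

section RealIneq

lemma one_sub_inv_le_log {x : ℝ} (hx : 0 < x) : 1 - 1/x ≤ Real.log x := by
  have := Real.log_le_sub_one_of_pos (show (0:ℝ) < 1/x by positivity)
  rw [Real.log_div one_ne_zero (ne_of_gt hx), Real.log_one] at this
  linarith

/-- log-sum inequality on a finset -/
lemma logsum_ineq {𝒴 : Type*} (s : Finset 𝒴) (p q : 𝒴 → ℝ)
    (hp : ∀ y ∈ s, 0 ≤ p y) (hq : ∀ y ∈ s, 0 ≤ q y)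
    (hac : ∀ y ∈ s, q y = 0 → p y = 0) :
    (∑ y ∈ s, p y) * Real.log ((∑ y ∈ s, p y) / (∑ y ∈ s, q y))
      ≤ ∑ y ∈ s, p y * Real.log (p y / q y) := by
  rcases eq_or_lt_of_le (Finset.sum_nonneg hp) with ha0 | hapos
  · have hp0 : ∀ y ∈ s, p y = 0 := Finset.sum_eq_zero_iff_of_nonneg hp |>.1 ha0.symm
    rw [← ha0, zero_mul]
    exact Finset.sum_nonneg (fun y hy => by rw [hp0 y hy, zero_mul])
  rcases eq_or_lt_of_le (Finset.sum_nonneg hq) with hb0 | hbpos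
  · exfalso
    have hq0 : ∀ y ∈ s, q y = 0 := Finset.sum_eq_zero_iff_of_nonneg hq |>.1 hb0.symm
    have h0 : ∑ y ∈ s, p y = 0 := Finset.sum_eq_zero (fun y hy => hac y hy (hq0 y hy))
    rw [h0] at hapos; exact lt_irrefl _ hapos
  set a := ∑ y ∈ s, p y with ha
  set b := ∑ y ∈ s, q y with hb
  have key : ∀ y ∈ s, p y * Real.log (a/b) + p y - (a/b) * q y ≤ p y * Real.log (p y / q y) := by
    intro y hy
    rcases eq_or_lt_of_le (hp y hy) with hp0 | hppos
    · rw [← hp0, zero_mul, zero_mul, zero_add]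
      have : 0 ≤ (a/b) * q y := mul_nonneg (by positivity) (hq y hy)
      linarith
    · have hqpos : 0 < q y := by
        rcases eq_or_lt_of_le (hq y hy) with h0 | h
        · exact absurd (hac y hy h0.symm) (by linarith)
        · exact h
      have hlog : Real.log (p y / q y) = Real.log (a/b) + Real.log ((p y * b) / (q y * a)) := by
        rw [← Real.log_mul (by positivity) (by positivity)]
        congr 1; field_simp
      rw [hlog, mul_add]
      have h2 : 1 - 1/((p y * b)/(q y * a)) ≤ Real.log ((p y * b)/(q y * a)) :=
        one_sub_inv_le_log (by positivity)
      have h3 : p y * (1 - 1/((p y * b)/(q y * a))) ≤ p y * Real.log ((p y * b)/(q y * a)) :=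
        mul_le_mul_of_nonneg_left h2 (le_of_lt hppos)
      have h4 : p y * (1 - 1/((p y * b)/(q y * a))) = p y - (a/b) * q y := by
        field_simp
      linarith
  have hsum : ∑ y ∈ s, (p y * Real.log (a/b) + p y - (a/b)*q y)
      = a * Real.log (a/b) + a - (a/b) * b := by
    rw [Finset.sum_sub_distrib, Finset.sum_add_distrib, ← Finset.sum_mul, ← Finset.mul_sum]
  have hab : (a/b) * b = a := by field_simp
  calc a * Real.log (a/b) = ∑ y ∈ s, (p y * Real.log (a/b) + p y - (a/b)*q y) := by
        rw [hsum, hab]; ring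
    _ ≤ ∑ y ∈ s, p y * Real.log (p y / q y) := Finset.sum_le_sum key

/-- binary Pinsker inequality -/
lemma binary_pinsker {a b : ℝ} (hb0 : 0 ≤ b) (hba : b ≤ a) (ha1 : a ≤ 1)
    (hz : b = 0 → a = 0) :
    2 * (a - b)^2 ≤ a * Real.log (a/b) + (1-a) * Real.log ((1-a)/(1-b)) := by
  rcases eq_or_lt_of_le hb0 with hb0' | hbpos
  · have : a = 0 := hz hb0'.symm
    simp [this, ← hb0']
  rcases eq_or_lt_of_le hba with hba' | hlt
  · subst hba'
    rw [div_self (by linarith), Real.log_one, mul_zero, zero_add, sub_self]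
    rcases eq_or_lt_of_le ha1 with h1 | h1
    · rw [h1]; norm_num
    · rw [div_self (by linarith), Real.log_one, mul_zero]; norm_num
  rcases eq_or_lt_of_le ha1 with ha1' | halt1
  · -- a = 1
    subst ha1'
    have hgoal : 2 * (1-b)^2 ≤ Real.log (1/b) := by
      set G : ℝ → ℝ := fun x => -Real.log x - 2*(1-x)^2 with hG
      have hderiv : ∀ x ∈ Set.Ioo b 1, deriv G x ≤ 0 := by
        intro x hx
        have hx0 : (0:ℝ) < x := lt_trans hbpos hx.1
        have hd : HasDerivAt G (-(1/x) - 2*(2*(1-x)*(-1))) x := by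
          have h1 : HasDerivAt Real.log (1/x) x := by
            simpa [one_div] using Real.hasDerivAt_log (ne_of_gt hx0)
          have h2 : HasDerivAt (fun x : ℝ => 2*(1-x)^2) (2*(2*(1-x)*(-1))) x := by
            have hid : HasDerivAt (fun x : ℝ => (1-x)) (-1) x := by
              simpa using (hasDerivAt_id x).const_sub 1
            simpa using ((hid.pow 2).const_mul 2)
          exact (h1.neg.sub h2)
        rw [hd.deriv]
        have hx1 : x < 1 := hx.2
        have h4 : 4*x*(1-x) ≤ 1 := by nlinarith [sq_nonneg (2*x-1)]
        have hinv : 4*(1-x) ≤ 1/x := by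
          rw [le_div_iff₀ hx0]; nlinarith
        nlinarith
      have hcont : ContinuousOn G (Set.Icc b 1) := by
        apply ContinuousOn.sub
        · apply ContinuousOn.neg
          apply Real.continuousOn_log.mono
          intro x hx
          exact ne_of_gt (lt_of_lt_of_le hbpos hx.1)
        · fun_prop
      have hdiff : DifferentiableOn ℝ G (interior (Set.Icc b 1)) := by
        rw [interior_Icc]
        intro x hx
        have hx0 : (0:ℝ) < x := lt_trans hbpos hx.1
        apply DifferentiableAt.differentiableWithinAt
        exact ((Real.differentiableAt_log (ne_of_gt hx0)).neg).sub (by fun_prop)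
      have hanti : AntitoneOn G (Set.Icc b 1) := by
        apply antitoneOn_of_deriv_nonpos (convex_Icc b 1) hcont hdiff
        intro x hx; rw [interior_Icc] at hx; exact hderiv x hx
      have hm := hanti (Set.mem_Icc.2 ⟨le_refl b, le_of_lt hlt⟩)
        (Set.mem_Icc.2 ⟨le_of_lt hlt, le_refl 1⟩) (le_of_lt hlt)
      simp only [hG, Real.log_one] at hm
      rw [Real.log_div one_ne_zero (ne_of_gt hbpos), Real.log_one]
      nlinarith [hm]
    calc 2*(1-b)^2 ≤ Real.log (1/b) := hgoal
      _ = 1 * Real.log (1/b) + (1-1) * Real.log ((1-1)/(1-b)) := by ring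
  · -- 0 < b < a < 1
    set G : ℝ → ℝ := fun x => a*(Real.log a - Real.log x)
        + (1-a)*(Real.log (1-a) - Real.log (1-x)) - 2*(a-x)^2 with hG
    have hsub : Set.Icc b a ⊆ Set.Ioo 0 1 := fun x hx =>
      ⟨lt_of_lt_of_le hbpos hx.1, lt_of_le_of_lt hx.2 halt1⟩
    have hderiv : ∀ x ∈ Set.Ioo b a, deriv G x ≤ 0 := by
      intro x hx
      have hx01 : x ∈ Set.Ioo (0:ℝ) 1 := hsub ⟨le_of_lt hx.1, le_of_lt hx.2⟩
      have hx0 : (0:ℝ) < x := hx01.1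
      have hx1 : x < 1 := hx01.2
      have hd : HasDerivAt G (a*(0 - 1/x) + (1-a)*(0 - (-1)/(1-x)) - 2*(2*(a-x)*(-1))) x := by
        have hlog : HasDerivAt (fun x : ℝ => Real.log a - Real.log x) (0 - 1/x) x := by
          have h1 : HasDerivAt Real.log (1/x) x := by
            simpa [one_div] using Real.hasDerivAt_log (ne_of_gt hx0)
          exact (hasDerivAt_const x (Real.log a)).sub h1
        have hlog2 : HasDerivAt (fun x : ℝ => Real.log (1-a) - Real.log (1-x))
            (0 - (-1)/(1-x)) x := by
          have h1x : HasDerivAt (fun x : ℝ => (1-x)) (-1) x := by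
            simpa using (hasDerivAt_id x).const_sub 1
          have hl : HasDerivAt (fun x : ℝ => Real.log (1-x)) (-1/(1-x)) x := by
            have h0 : (0:ℝ) < 1-x := by linarith
            have := (Real.hasDerivAt_log (ne_of_gt h0)).comp x h1x
            simpa [div_eq_mul_inv, mul_comm, Function.comp_def] using this
          exact (hasDerivAt_const x (Real.log (1-a))).sub hl
        have hsq : HasDerivAt (fun x : ℝ => 2*(a-x)^2) (2*(2*(a-x)*(-1))) x := by
          have hid : HasDerivAt (fun x : ℝ => (a-x)) (-1) x := by
            simpa using (hasDerivAt_id x).const_sub a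
          simpa using ((hid.pow 2).const_mul 2)
        exact ((hlog.const_mul a).add (hlog2.const_mul (1-a))).sub hsq
      rw [hd.deriv]
      have hxa : x < a := hx.2
      have hxx : x - x^2 ≠ 0 := by nlinarith
      have key : a*(0 - 1/x) + (1-a)*(0 - (-1)/(1-x)) - 2*(2*(a-x)*(-1))
          = (a-x)*(4 - 1/(x - x^2)) := by
        have h1x : (1:ℝ) - x ≠ 0 := by linarith
        have hx0' : x ≠ 0 := ne_of_gt hx0
        field_simp
        ring
      rw [key]
      apply mul_nonpos_of_nonneg_of_nonpos (by linarith)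
      have h1 : (4:ℝ) ≤ 1/(x - x^2) := by
        rw [le_div_iff₀ (by nlinarith)]
        nlinarith [sq_nonneg (2*x-1)]
      linarith
    have hcont : ContinuousOn G (Set.Icc b a) := by
      apply ContinuousOn.sub
      apply ContinuousOn.add
      · apply continuousOn_const.mul
        apply continuousOn_const.sub
        apply Real.continuousOn_log.mono
        intro x hx; exact ne_of_gt (lt_of_lt_of_le hbpos hx.1)
      · apply continuousOn_const.mul
        apply continuousOn_const.sub
        apply ContinuousOn.comp Real.continuousOn_log (by fun_prop)
        intro x hx
        have hx2 := (hsub hx).2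
        simp only [Set.mem_compl_iff, Set.mem_singleton_iff]
        intro hc
        rw [sub_eq_zero] at hc
        exact absurd hc.symm (ne_of_lt hx2)
      · fun_prop
    have hdiff : DifferentiableOn ℝ G (interior (Set.Icc b a)) := by
      rw [interior_Icc]
      intro x hx
      have hx01 : x ∈ Set.Ioo (0:ℝ) 1 := hsub ⟨le_of_lt hx.1, le_of_lt hx.2⟩
      apply DifferentiableAt.differentiableWithinAt
      apply DifferentiableAt.sub
      apply DifferentiableAt.add
      · apply DifferentiableAt.const_mul
        exact (differentiableAt_const _).sub (Real.differentiableAt_log (ne_of_gt hx01.1))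
      · apply DifferentiableAt.const_mul
        apply DifferentiableAt.sub (differentiableAt_const _)
        have h0 : (1:ℝ) - x ≠ 0 := ne_of_gt (by linarith [hx01.2])
        exact (Real.differentiableAt_log h0).comp x (by fun_prop)
      · fun_prop
    have hanti : AntitoneOn G (Set.Icc b a) := by
      apply antitoneOn_of_deriv_nonpos (convex_Icc b a) hcont hdiff
      intro x hx; rw [interior_Icc] at hx; exact hderiv x hx
    have hm := hanti (Set.mem_Icc.2 ⟨le_refl b, le_of_lt hlt⟩)
      (Set.mem_Icc.2 ⟨hba, le_refl a⟩) (le_of_lt hlt)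
    have hGa : G a = 0 := by simp [hG]
    rw [hGa] at hm
    have hb1 : (0:ℝ) < 1 - b := by linarith
    have ha0 : (0:ℝ) < a := lt_trans hbpos hlt
    have ha1' : (0:ℝ) < 1 - a := by linarith
    rw [Real.log_div (ne_of_gt ha0) (ne_of_gt hbpos),
      Real.log_div (ne_of_gt ha1') (ne_of_gt hb1)]
    simp only [hG] at hm
    nlinarith [hm]

/-- Pinsker's inequality for probability vectors on a fintype -/
lemma pinsker_fin {𝒴 : Type*} [Fintype 𝒴] (p q : 𝒴 → ℝ)
    (hp : ∀ y, 0 ≤ p y) (hq : ∀ y, 0 ≤ q y)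
    (hps : ∑ y, p y = 1) (hqs : ∑ y, q y = 1)
    (hac : ∀ y, q y = 0 → p y = 0) :
    (∑ y, |p y - q y|)^2 / 2 ≤ ∑ y, p y * Real.log (p y / q y) := by
  classical
  set S : Finset 𝒴 := Finset.univ.filter (fun y => q y ≤ p y) with hS
  set a := ∑ y ∈ S, p y with ha
  set b := ∑ y ∈ S, q y with hb
  set a' := ∑ y ∈ Sᶜ, p y with ha'
  set b' := ∑ y ∈ Sᶜ, q y with hb'
  have hsplit_p : a + a' = 1 := by rw [ha, ha', Finset.sum_add_sum_compl]; exact hps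
  have hsplit_q : b + b' = 1 := by rw [hb, hb', Finset.sum_add_sum_compl]; exact hqs
  have hba : b ≤ a := Finset.sum_le_sum (fun y hy => by
    simp only [hS, Finset.mem_filter] at hy; exact hy.2)
  have ha'b' : a' ≤ b' := Finset.sum_le_sum (fun y hy => by
    simp only [hS, Finset.mem_compl, Finset.mem_filter, Finset.mem_univ, true_and] at hy
    linarith [not_le.1 hy])
  have habs : ∑ y, |p y - q y| = 2*(a - b) := by
    rw [← Finset.sum_add_sum_compl S]
    have h1 : ∑ y ∈ S, |p y - q y| = a - b := by
      rw [ha, hb, ← Finset.sum_sub_distrib]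
      apply Finset.sum_congr rfl
      intro y hy
      simp only [hS, Finset.mem_filter] at hy
      rw [abs_of_nonneg (by linarith [hy.2])]
    have h2 : ∑ y ∈ Sᶜ, |p y - q y| = b' - a' := by
      rw [hb', ha', ← Finset.sum_sub_distrib]
      apply Finset.sum_congr rfl
      intro y hy
      simp only [hS, Finset.mem_compl, Finset.mem_filter, Finset.mem_univ, true_and] at hy
      rw [abs_of_nonpos (by linarith [not_le.1 hy])]
      ring
    rw [h1, h2]; linarith
  have hb0 : 0 ≤ b := Finset.sum_nonneg (fun y _ => hq y)
  have ha1 : a ≤ 1 := by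
    have : 0 ≤ a' := Finset.sum_nonneg (fun y _ => hp y)
    linarith
  have hz : b = 0 → a = 0 := by
    intro h0
    have hq0 : ∀ y ∈ S, q y = 0 := Finset.sum_eq_zero_iff_of_nonneg (fun y _ => hq y) |>.1 h0
    exact Finset.sum_eq_zero (fun y hy => hac y (hq0 y hy))
  have hbp := binary_pinsker hb0 hba ha1 hz
  have hls1 := logsum_ineq S p q (fun y _ => hp y) (fun y _ => hq y) (fun y _ => hac y)
  have hls2 := logsum_ineq Sᶜ p q (fun y _ => hp y) (fun y _ => hq y) (fun y _ => hac y)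
  have h1a : 1 - a = a' := by linarith
  have h1b : 1 - b = b' := by linarith
  rw [h1a, h1b] at hbp
  have htot : ∑ y, p y * Real.log (p y / q y)
      = (∑ y ∈ S, p y * Real.log (p y / q y)) + ∑ y ∈ Sᶜ, p y * Real.log (p y / q y) :=
    (Finset.sum_add_sum_compl S _).symm
  rw [htot, habs]
  calc (2*(a-b))^2/2 = 2*(a-b)^2 := by ring
    _ ≤ a * Real.log (a/b) + a' * Real.log (a'/b') := hbp
    _ ≤ _ := add_le_add hls1 hls2

end RealIneq

section FinMeasure
variable {𝒴 : Type*} [Fintype 𝒴] [MeasurableSpace 𝒴] [DiscreteMeasurableSpace 𝒴]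

lemma measure_eq_sum_fin (m : Measure 𝒴) (s : Set 𝒴) : m s = ∑ y ∈ s.toFinset, m {y} := by
  have hs : s = ⋃ y ∈ s.toFinset, {y} := by
    ext y; simp
  conv_lhs => rw [hs]
  rw [measure_biUnion_finset (hd := fun y _ z _ hyz => by
      simp [Function.onFun, Set.disjoint_singleton, hyz])
    (hm := fun y _ => MeasurableSet.singleton y)]

lemma ac_of_singletons {m1 m2 : Measure 𝒴} (h : ∀ y, m2 {y} = 0 → m1 {y} = 0) :
    m1 ≪ m2 := by
  intro s hs
  rw [measure_eq_sum_fin m1 s]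
  apply Finset.sum_eq_zero
  intro y hy
  apply h
  have : {y} ⊆ s := by simpa using hy
  exact measure_mono_null this hs

lemma rnDeriv_fin (m1 m2 : Measure 𝒴) [IsFiniteMeasure m2] (hac : m1 ≪ m2) :
    m1.rnDeriv m2 =ᵐ[m2] fun y => m1 {y} / m2 {y} := by
  have hf : Measurable (fun y => m1 {y} / m2 {y}) := .of_discrete
  have heq : m1 = m2.withDensity (fun y => m1 {y} / m2 {y}) := by
    ext s hs
    rw [withDensity_apply _ hs, measure_eq_sum_fin m1 s]
    have hrw : ∫⁻ y in s, m1 {y} / m2 {y} ∂m2 = ∑ y ∈ s.toFinset, (m1 {y} / m2 {y}) * m2 {y} := by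
      have hs' : s = ⋃ y ∈ s.toFinset, {y} := by ext y; simp
      conv_lhs => rw [hs']
      rw [lintegral_biUnion_finset (hd := fun y _ z _ hyz => by
          simp [Function.onFun, Set.disjoint_singleton, hyz])
        (hm := fun y _ => MeasurableSet.singleton y)]
      apply Finset.sum_congr rfl
      intro y _
      rw [lintegral_singleton]
    rw [hrw]
    apply Finset.sum_congr rfl
    intro y _
    by_cases h0 : m2 {y} = 0
    · rw [h0, mul_zero, hac h0]
    · rw [ENNReal.div_mul_cancel h0 (measure_ne_top m2 _)]
  exact (Measure.eq_rnDeriv (ν := m2) hf (Measure.MutuallySingular.zero_left)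
    (by rw [zero_add]; exact heq)).symm

lemma ae_prop_of_singleton {m : Measure 𝒴} {P : 𝒴 → Prop} (h : ∀ᵐ y ∂m, P y) {y : 𝒴}
    (h0 : m {y} ≠ 0) : P y := by
  by_contra hc
  have hsub : {y} ⊆ {x | ¬ P x} := by
    intro z hz
    simp only [Set.mem_singleton_iff] at hz
    subst hz; exact hc
  exact h0 (measure_mono_null hsub (ae_iff.mp h))

lemma klDiv_fin_eq (m1 m2 : Measure 𝒴) [IsProbabilityMeasure m1] [IsProbabilityMeasure m2]
    (hac : m1 ≪ m2) :
    klDiv m1 m2 = ENNReal.ofReal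
      (∑ y, (m1 {y}).toReal * Real.log ((m1 {y}).toReal / (m2 {y}).toReal)) := by
  have hint : Integrable (llr m1 m2) m1 := .of_finite
  rw [klDiv, if_pos ⟨hac, hint⟩]
  congr 1
  rw [integral_fintype hint]
  have hae : ∀ᵐ y ∂m1, m1.rnDeriv m2 y = m1 {y} / m2 {y} := hac.ae_eq (rnDeriv_fin m1 m2 hac)
  apply Finset.sum_congr rfl
  intro y _
  by_cases h0 : m1 {y} = 0
  · simp [h0, measureReal_def]
  · have hy : m1.rnDeriv m2 y = m1 {y} / m2 {y} := ae_prop_of_singleton hae h0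
    rw [llr, hy, ENNReal.toReal_div, smul_eq_mul, measureReal_def]
end FinMeasure


section Tower
open ENNReal

lemma lintegral_mul_eq_of_setIntegral_eq {Ω : Type*} [m0 : MeasurableSpace Ω] (μ : Measure Ω)
    [IsFiniteMeasure μ] {m : MeasurableSpace Ω} (hm : m ≤ m0) {p q : Ω → ℝ}
    (hp : Measurable[m0] p) (hq : Measurable[m0] q) (hp0 : ∀ ω, 0 ≤ p ω) (hq0 : ∀ ω, 0 ≤ q ω)
    (hpi : Integrable p μ) (hqi : Integrable q μ)
    (hset : ∀ s, MeasurableSet[m] s → ∫ ω in s, p ω ∂μ = ∫ ω in s, q ω ∂μ)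
    {G : Ω → ℝ≥0∞} (hG : Measurable[m] G) :
    ∫⁻ ω, ENNReal.ofReal (p ω) * G ω ∂μ = ∫⁻ ω, ENNReal.ofReal (q ω) * G ω ∂μ := by
  have hpm : Measurable[m0] (fun ω => ENNReal.ofReal (p ω)) := hp.ennreal_ofReal
  have hqm : Measurable[m0] (fun ω => ENNReal.ofReal (q ω)) := hq.ennreal_ofReal
  have hGm : Measurable[m0] G := hG.mono hm le_rfl
  have h1 : ∫⁻ ω, ENNReal.ofReal (p ω) * G ω ∂μ
      = ∫⁻ ω, G ω ∂(μ.withDensity (fun ω => ENNReal.ofReal (p ω))) :=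
    (lintegral_withDensity_eq_lintegral_mul μ hpm hGm).symm
  have h2 : ∫⁻ ω, ENNReal.ofReal (q ω) * G ω ∂μ
      = ∫⁻ ω, G ω ∂(μ.withDensity (fun ω => ENNReal.ofReal (q ω))) :=
    (lintegral_withDensity_eq_lintegral_mul μ hqm hGm).symm
  have htrim : (μ.withDensity (fun ω => ENNReal.ofReal (p ω))).trim hm
      = (μ.withDensity (fun ω => ENNReal.ofReal (q ω))).trim hm := by
    refine Measure.ext (fun s hs => ?_)
    rw [trim_measurableSet_eq hm hs, trim_measurableSet_eq hm hs,
      withDensity_apply _ (hm s hs), withDensity_apply _ (hm s hs)]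
    rw [← ofReal_integral_eq_lintegral_ofReal hpi.restrict (Filter.Eventually.of_forall hp0),
      ← ofReal_integral_eq_lintegral_ofReal hqi.restrict (Filter.Eventually.of_forall hq0)]
    rw [hset s hs]
  rw [h1, h2, ← lintegral_trim hm hG, ← lintegral_trim hm hG, htrim]


lemma ae_imp_zero_of_tower {Ω : Type*} [m0 : MeasurableSpace Ω] (μ : Measure Ω)
    {m : MeasurableSpace Ω} {p q : Ω → ℝ}
    (hpm : Measurable[m0] p) (hp0 : ∀ ω, 0 ≤ p ω) (hqa : Measurable[m0] q)
    (hqm : Measurable[m] q)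
    (htower : ∀ G : Ω → ℝ≥0∞, Measurable[m] G →
      ∫⁻ ω, ENNReal.ofReal (p ω) * G ω ∂μ = ∫⁻ ω, ENNReal.ofReal (q ω) * G ω ∂μ) :
    ∀ᵐ ω ∂μ, q ω = 0 → p ω = 0 := by
  have hNm : MeasurableSet[m] {ω | q ω = 0} := hqm (measurableSet_singleton 0)
  have hN : MeasurableSet[m0] {ω | q ω = 0} := hqa (measurableSet_singleton 0)
  have hGm : Measurable[m] ({ω | q ω = 0}.indicator (fun _ => (1:ℝ≥0∞))) :=
    Measurable.indicator measurable_const hNm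
  have h0 : ∫⁻ ω, ENNReal.ofReal (p ω) * ({ω | q ω = 0}.indicator
      (fun _ => (1:ℝ≥0∞))) ω ∂μ = 0 := by
    rw [htower _ hGm, ← lintegral_zero]
    apply lintegral_congr
    intro ω
    by_cases hω : q ω = 0
    · rw [hω]; simp
    · rw [Set.indicator_of_notMem (show ω ∉ {ω | q ω = 0} from hω), mul_zero]
  have hae := (lintegral_eq_zero_iff (hpm.ennreal_ofReal.mul
    (Measurable.indicator measurable_const hN))).mp h0
  filter_upwards [hae] with ω hω hq0
  have h01 := hω
  simp only [Pi.zero_apply, Pi.mul_apply] at h01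
  rw [Set.indicator_of_mem (show ω ∈ {ω | q ω = 0} from hq0), mul_one] at h01
  have h00 := ENNReal.ofReal_eq_zero.mp h01
  linarith [hp0 ω]

lemma event_calc {Ω 𝒴 : Type*} [m0 : MeasurableSpace Ω] [Fintype 𝒴] [MeasurableSpace 𝒴]
    [MeasurableSingletonClass 𝒴] (μ : Measure Ω) [IsFiniteMeasure μ]
    {Y F : Ω → 𝒴} (hY : Measurable[m0] Y)
    (hSFa : ∀ y, MeasurableSet[m0] (F ⁻¹' {y})) {C : 𝒴 → Ω → ℝ}
    (hCint : ∀ y, Integrable (C y) μ)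
    (hCind : ∀ y, ∫ ω in F ⁻¹' {y}, C y ω ∂μ
      = ∫ ω in F ⁻¹' {y}, Set.indicator {ω' | Y ω' = y} (fun _ => (1:ℝ)) ω ∂μ) :
    MeasurableSet[m0] {ω | Y ω = F ω} ∧
    μ {ω | Y ω = F ω} = ENNReal.ofReal (∫ ω, ∑ y, (F ⁻¹' {y}).indicator (C y) ω ∂μ) := by
  classical
  have hEq : {ω | Y ω = F ω} = ⋃ y, (Y ⁻¹' {y} ∩ F ⁻¹' {y}) := by
    ext ω
    simp only [Set.mem_setOf_eq, Set.mem_iUnion, Set.mem_inter_iff, Set.mem_preimage,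
      Set.mem_singleton_iff]
    constructor
    · intro h; exact ⟨F ω, h, rfl⟩
    · rintro ⟨y, h1, h2⟩; rw [h1, h2]
  have hpieces : ∀ y : 𝒴, MeasurableSet[m0] (Y ⁻¹' {y} ∩ F ⁻¹' {y}) := fun y =>
    MeasurableSet.inter (hY (measurableSet_singleton y)) (hSFa y)
  have hmeasGood : MeasurableSet[m0] {ω | Y ω = F ω} := by
    rw [hEq]
    exact MeasurableSet.iUnion hpieces
  refine ⟨hmeasGood, ?_⟩
  have hdisj : Pairwise (Function.onFun Disjoint (fun y => Y ⁻¹' {y} ∩ F ⁻¹' {y})) := by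
    intro y z hyz
    refine Set.disjoint_left.mpr (fun ω hω hω' => hyz ?_)
    have h1 : Y ω = y := hω.1
    have h2 : Y ω = z := hω'.1
    rw [← h1, h2]
  rw [hEq, measure_iUnion hdisj hpieces, tsum_fintype]
  have hterm : ∀ y : 𝒴, ∫ ω in F ⁻¹' {y}, C y ω ∂μ
      = (μ (Y ⁻¹' {y} ∩ F ⁻¹' {y})).toReal := by
    intro y
    have h1 : ∫ ω in F ⁻¹' {y}, Set.indicator {ω' | Y ω' = y} (fun _ => (1:ℝ)) ω ∂μ
        = (μ (Y ⁻¹' {y} ∩ F ⁻¹' {y})).toReal := by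
      have hsets : {ω' | Y ω' = y} = Y ⁻¹' {y} := rfl
      rw [hsets, integral_indicator_const (1:ℝ) (hY (measurableSet_singleton y)),
        measureReal_restrict_apply (hY (measurableSet_singleton y)), smul_eq_mul, mul_one, measureReal_def]
    rw [hCind y, h1]
  have hsum : ∫ ω, ∑ y, (F ⁻¹' {y}).indicator (C y) ω ∂μ
      = ∑ y : 𝒴, ∫ ω in F ⁻¹' {y}, C y ω ∂μ := by
    rw [integral_finset_sum _ (fun y _ => (hCint y).indicator (hSFa y))]
    exact Finset.sum_congr rfl (fun y _ => integral_indicator (hSFa y))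
  rw [hsum, ENNReal.ofReal_sum_of_nonneg
    (fun y _ => by rw [hterm y]; exact ENNReal.toReal_nonneg)]
  apply Finset.sum_congr rfl
  intro y _
  rw [hterm y, ENNReal.ofReal_toReal (measure_ne_top μ _)]

end Tower

/-- **Forward TEFS classification guarantee (Theorem 4, classification).** If the selected
subset `A` satisfies `I(Y; X_A ∣ Y⁻) ≥ Δ² / 2`, then the best classification error using
only `(X_A, Y⁻)` is at most `ε + √(2 · TE_{X → Y} − Δ²)`. -/
theorem forward_TEFS_classification_error_bound
    {Ω 𝒴 : Type*} [MeasurableSpace Ω]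
    [Fintype 𝒴] [Nonempty 𝒴] [MeasurableSpace 𝒴] [DiscreteMeasurableSpace 𝒴]
    (μ : Measure Ω) [IsProbabilityMeasure μ]
    {D dY : ℕ} {d : Fin D → ℕ}
    (Y : Ω → 𝒴) (X : (i : Fin D) → Ω → (Fin (d i) → ℝ)) (Ym : Ω → (Fin dY → ℝ))
    (hY : Measurable Y) (hX : ∀ i, Measurable (X i)) (hYm : Measurable Ym)
    (ε : ℝ≥0∞)
    (hε : ε = μ {ω | Y ω ≠ argmaxFin (fun y =>
      (μ[Set.indicator {ω' | Y ω' = y} (fun _ => (1 : ℝ)) | MeasurableSpace.comap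
        (fun ω' => (featTuple X Finset.univ ω', Ym ω')) inferInstance]) ω)})
    (Δ : ℝ) (A : Finset (Fin D))
    (hA : ENNReal.ofReal (Δ ^ 2 / 2) ≤ cmi μ Y (featTuple X A) Ym) :
    (⨅ g : {g : ((i : A) → Fin (d i.1) → ℝ) × (Fin dY → ℝ) → 𝒴 // Measurable g},
        μ {ω | Y ω ≠ g.1 (featTuple X A ω, Ym ω)})
      ≤ ε + (2 * cmi μ Y (featTuple X Finset.univ) Ym - ENNReal.ofReal (Δ ^ 2))
              ^ (2⁻¹ : ℝ) := by
  classical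
  subst hε
  -- measurability of the feature tuples and conditioning maps
  have hFT : ∀ S : Finset (Fin D), Measurable (featTuple X S) := fun S =>
    measurable_pi_lambda _ (fun i => hX i.1)
  set W := fun ω' => (featTuple X Finset.univ ω', Ym ω') with hW_def
  set V := fun ω' => (featTuple X A ω', Ym ω') with hV_def
  have hW : Measurable W := (hFT _).prodMk hYm
  have hV : Measurable V := (hFT _).prodMk hYm
  have hmWle : MeasurableSpace.comap W inferInstance ≤ ‹MeasurableSpace Ω› := hW.comap_le
  have hmVle : MeasurableSpace.comap V inferInstance ≤ ‹MeasurableSpace Ω› := hV.comap_le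
  have hmZle : MeasurableSpace.comap Ym inferInstance ≤ ‹MeasurableSpace Ω› := hYm.comap_le
  have hmVW : MeasurableSpace.comap V inferInstance ≤ MeasurableSpace.comap W inferInstance := by
    have hπ : Measurable (fun p : ((i : (Finset.univ : Finset (Fin D))) → Fin (d i.1) → ℝ) ×
        (Fin dY → ℝ) => ((fun i : A => p.1 ⟨i.1, Finset.mem_univ i.1⟩), p.2)) :=
      (measurable_pi_lambda _ (fun i =>
        (measurable_pi_apply _).comp measurable_fst)).prodMk measurable_snd
    have hfact : V = (fun p : ((i : (Finset.univ : Finset (Fin D))) → Fin (d i.1) → ℝ) ×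
        (Fin dY → ℝ) => ((fun i : A => p.1 ⟨i.1, Finset.mem_univ i.1⟩), p.2)) ∘ W := rfl
    rw [hfact, ← MeasurableSpace.comap_comp]
    exact MeasurableSpace.comap_mono hπ.comap_le
  have hmZV : MeasurableSpace.comap Ym inferInstance ≤ MeasurableSpace.comap V inferInstance := by
    have hfact : Ym = (fun p : ((i : A) → Fin (d i.1) → ℝ) × (Fin dY → ℝ) => p.2) ∘ V := rfl
    rw [hfact, ← MeasurableSpace.comap_comp]
    exact MeasurableSpace.comap_mono measurable_snd.comap_le
  -- conditional distributions
  set P : 𝒴 → Ω → ℝ := fun y ω => (condDistrib Y W μ (W ω) {y}).toReal with hP_def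
  set Q : 𝒴 → Ω → ℝ := fun y ω => (condDistrib Y V μ (V ω) {y}).toReal with hQ_def
  set R : 𝒴 → Ω → ℝ := fun y ω => (condDistrib Y Ym μ (Ym ω) {y}).toReal with hR_def
  have hPm : ∀ y, Measurable (P y) := fun y =>
    ((Kernel.measurable_coe _ (measurableSet_singleton y)).comp hW).ennreal_toReal
  have hQm : ∀ y, Measurable (Q y) := fun y =>
    ((Kernel.measurable_coe _ (measurableSet_singleton y)).comp hV).ennreal_toReal
  have hRm : ∀ y, Measurable (R y) := fun y =>
    ((Kernel.measurable_coe _ (measurableSet_singleton y)).comp hYm).ennreal_toReal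
  have hQmV : ∀ y, Measurable[MeasurableSpace.comap V inferInstance] (Q y) := fun y =>
    ((Kernel.measurable_coe _ (measurableSet_singleton y)).comp
      (measurable_iff_comap_le.mpr le_rfl)).ennreal_toReal
  have hRmZ : ∀ y, Measurable[MeasurableSpace.comap Ym inferInstance] (R y) := fun y =>
    ((Kernel.measurable_coe _ (measurableSet_singleton y)).comp
      (measurable_iff_comap_le.mpr le_rfl)).ennreal_toReal
  have hP0 : ∀ y ω, 0 ≤ P y ω := fun y ω => ENNReal.toReal_nonneg
  have hQ0 : ∀ y ω, 0 ≤ Q y ω := fun y ω => ENNReal.toReal_nonneg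
  have hR0 : ∀ y ω, 0 ≤ R y ω := fun y ω => ENNReal.toReal_nonneg
  have hP1 : ∀ y ω, P y ω ≤ 1 := fun y ω => by
    rw [hP_def]
    exact ENNReal.toReal_le_of_le_ofReal one_pos.le (by simpa using prob_le_one)
  have hQ1 : ∀ y ω, Q y ω ≤ 1 := fun y ω => by
    rw [hQ_def]
    exact ENNReal.toReal_le_of_le_ofReal one_pos.le (by simpa using prob_le_one)
  have hR1 : ∀ y ω, R y ω ≤ 1 := fun y ω => by
    rw [hR_def]
    exact ENNReal.toReal_le_of_le_ofReal one_pos.le (by simpa using prob_le_one)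
  have hint1 : ∀ (f : Ω → ℝ), Measurable f → (∀ ω, 0 ≤ f ω) → (∀ ω, f ω ≤ 1) →
      Integrable f μ := fun f hf h0 h1 =>
    Integrable.mono' (integrable_const (1:ℝ)) hf.aestronglyMeasurable
      (Filter.Eventually.of_forall (fun ω => by
        rw [Real.norm_eq_abs, abs_of_nonneg (h0 ω)]; exact h1 ω))
  have hPint : ∀ y, Integrable (P y) μ := fun y => hint1 _ (hPm y) (hP0 y) (hP1 y)
  have hQint : ∀ y, Integrable (Q y) μ := fun y => hint1 _ (hQm y) (hQ0 y) (hQ1 y)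
  have hRint : ∀ y, Integrable (R y) μ := fun y => hint1 _ (hRm y) (hR0 y) (hR1 y)
  -- the conditional expectations
  have hCP : ∀ y : 𝒴, P y =ᵐ[μ]
      μ[Set.indicator {ω' | Y ω' = y} (fun _ => (1:ℝ)) | MeasurableSpace.comap W inferInstance] :=
    fun y => condDistrib_ae_eq_condExp hW hY (measurableSet_singleton y)
  have hCQ : ∀ y : 𝒴, Q y =ᵐ[μ]
      μ[Set.indicator {ω' | Y ω' = y} (fun _ => (1:ℝ)) | MeasurableSpace.comap V inferInstance] :=
    fun y => condDistrib_ae_eq_condExp hV hY (measurableSet_singleton y)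
  have hCR : ∀ y : 𝒴, R y =ᵐ[μ]
      μ[Set.indicator {ω' | Y ω' = y} (fun _ => (1:ℝ)) | MeasurableSpace.comap Ym inferInstance] :=
    fun y => condDistrib_ae_eq_condExp hYm hY (measurableSet_singleton y)
  have hindint : ∀ y : 𝒴, Integrable (Set.indicator {ω' | Y ω' = y} (fun _ => (1:ℝ))) μ :=
    fun y => (integrable_const (1:ℝ)).indicator (hY (measurableSet_singleton y))
  -- set-integral identities
  have hsetPQ : ∀ y : 𝒴, ∀ s : Set Ω, MeasurableSet[MeasurableSpace.comap V inferInstance] s →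
      ∫ ω in s, P y ω ∂μ = ∫ ω in s, Q y ω ∂μ := by
    intro y s hs
    rw [integral_congr_ae (ae_restrict_of_ae (hCP y)),
      integral_congr_ae (ae_restrict_of_ae (hCQ y)),
      setIntegral_condExp hmWle (hindint y) (hmVW s hs),
      setIntegral_condExp hmVle (hindint y) hs]
  have hsetQR : ∀ y : 𝒴, ∀ s : Set Ω, MeasurableSet[MeasurableSpace.comap Ym inferInstance] s →
      ∫ ω in s, Q y ω ∂μ = ∫ ω in s, R y ω ∂μ := by
    intro y s hs
    rw [integral_congr_ae (ae_restrict_of_ae (hCQ y)),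
      integral_congr_ae (ae_restrict_of_ae (hCR y)),
      setIntegral_condExp hmVle (hindint y) (hmZV s hs),
      setIntegral_condExp hmZle (hindint y) hs]
  -- the tower property in lintegral form
  have towerPQ : ∀ y : 𝒴, ∀ G : Ω → ℝ≥0∞,
      Measurable[MeasurableSpace.comap V inferInstance] G →
      ∫⁻ ω, ENNReal.ofReal (P y ω) * G ω ∂μ = ∫⁻ ω, ENNReal.ofReal (Q y ω) * G ω ∂μ :=
    fun y G hG => lintegral_mul_eq_of_setIntegral_eq μ hmVle (hPm y) (hQm y) (hP0 y) (hQ0 y)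
      (hPint y) (hQint y) (hsetPQ y) hG
  have towerQR : ∀ y : 𝒴, ∀ G : Ω → ℝ≥0∞,
      Measurable[MeasurableSpace.comap Ym inferInstance] G →
      ∫⁻ ω, ENNReal.ofReal (Q y ω) * G ω ∂μ = ∫⁻ ω, ENNReal.ofReal (R y ω) * G ω ∂μ :=
    fun y G hG => lintegral_mul_eq_of_setIntegral_eq μ hmZle (hQm y) (hRm y) (hQ0 y) (hR0 y)
      (hQint y) (hRint y) (hsetQR y) hG
  -- a.e. absolute continuity of the conditional laws
  have hacPQ : ∀ᵐ ω ∂μ, ∀ y, Q y ω = 0 → P y ω = 0 := by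
    rw [ae_all_iff]
    exact fun y => ae_imp_zero_of_tower μ (hPm y) (hP0 y) (hQm y) (hQmV y) (towerPQ y)
  have hacQR : ∀ᵐ ω ∂μ, ∀ y, R y ω = 0 → Q y ω = 0 := by
    rw [ae_all_iff]
    exact fun y => ae_imp_zero_of_tower μ (hQm y) (hQ0 y) (hRm y) (hRmZ y) (towerQR y)
  have hacPR : ∀ᵐ ω ∂μ, ∀ y, R y ω = 0 → P y ω = 0 := by
    filter_upwards [hacPQ, hacQR] with ω h1 h2 y hy
    exact h1 y (h2 y hy)
  -- pointwise sums of the conditional probability vectors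
  have hPsum : ∀ ω, ∑ y, P y ω = 1 := by
    intro ω
    have h1 : (condDistrib Y W μ (W ω)) Set.univ = 1 := measure_univ
    rw [measure_eq_sum_fin _ Set.univ] at h1
    rw [hP_def]
    rw [← ENNReal.toReal_sum (fun y _ => measure_ne_top _ _)]
    simp only [Set.toFinset_univ] at h1
    rw [h1]
    rfl
  have hQsum : ∀ ω, ∑ y, Q y ω = 1 := by
    intro ω
    have h1 : (condDistrib Y V μ (V ω)) Set.univ = 1 := measure_univ
    rw [measure_eq_sum_fin _ Set.univ] at h1
    rw [hQ_def]
    rw [← ENNReal.toReal_sum (fun y _ => measure_ne_top _ _)]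
    simp only [Set.toFinset_univ] at h1
    rw [h1]
    rfl
  have hRsum : ∀ ω, ∑ y, R y ω = 1 := by
    intro ω
    have h1 : (condDistrib Y Ym μ (Ym ω)) Set.univ = 1 := measure_univ
    rw [measure_eq_sum_fin _ Set.univ] at h1
    rw [hR_def]
    rw [← ENNReal.toReal_sum (fun y _ => measure_ne_top _ _)]
    simp only [Set.toFinset_univ] at h1
    rw [h1]
    rfl
  -- classifiers
  set gstar := fun v => argmaxFin (fun y => (condDistrib Y V μ v {y}).toReal) with hgstar_def
  have hgstarMeas : Measurable gstar := measurable_argmaxFin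
    (fun y => (Kernel.measurable_coe _ (measurableSet_singleton y)).ennreal_toReal)
  set yhat := fun ω => argmaxFin (fun y =>
    (μ[Set.indicator {ω' | Y ω' = y} (fun _ => (1 : ℝ)) | MeasurableSpace.comap
      W inferInstance]) ω) with hyhat_def
  have hyhatW : Measurable[MeasurableSpace.comap W inferInstance] yhat := by
    rw [hyhat_def]
    exact @measurable_argmaxFin 𝒴 _ _ Ω (MeasurableSpace.comap W inferInstance) _ _
      (fun y => stronglyMeasurable_condExp.measurable)
  have hgstarV : Measurable[MeasurableSpace.comap V inferInstance] (fun ω => gstar (V ω)) :=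
    hgstarMeas.comp (measurable_iff_comap_le.mpr le_rfl)
  -- event computations
  have hyhatSF : ∀ y, MeasurableSet (yhat ⁻¹' {y}) := fun y =>
    hmWle _ (hyhatW (measurableSet_singleton y))
  have hgstarSF : ∀ y, MeasurableSet ((fun ω => gstar (V ω)) ⁻¹' {y}) := fun y =>
    hmVle _ (hgstarV (measurableSet_singleton y))
  have hCWint : ∀ y : 𝒴, Integrable
      (μ[Set.indicator {ω' | Y ω' = y} (fun _ => (1:ℝ)) | MeasurableSpace.comap
        W inferInstance]) μ := fun y => integrable_condExp
  have hyhatCalc := event_calc μ hY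
    (F := yhat)
    (fun y => hyhatSF y)
    (C := fun y => μ[Set.indicator {ω' | Y ω' = y} (fun _ => (1:ℝ)) | MeasurableSpace.comap
        W inferInstance])
    hCWint
    (fun y => by
      rw [setIntegral_condExp hmWle (hindint y) (hyhatW (measurableSet_singleton y))])
  have hgstarCalc := event_calc μ hY
    (F := fun ω => gstar (V ω))
    (fun y => hgstarSF y)
    (C := Q)
    hQint
    (fun y => by
      rw [integral_congr_ae (ae_restrict_of_ae (hCQ y)),
        setIntegral_condExp hmVle (hindint y) (hgstarV (measurableSet_singleton y))])
  -- the three integrands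
  set e1 : Ω → ℝ := fun ω => ∑ y, (yhat ⁻¹' {y}).indicator
    (μ[Set.indicator {ω' | Y ω' = y} (fun _ => (1:ℝ)) | MeasurableSpace.comap
      W inferInstance]) ω with he1_def
  set e2 : Ω → ℝ := fun ω => ∑ y, ((fun ω' => gstar (V ω')) ⁻¹' {y}).indicator (Q y) ω
    with he2_def
  set tS : Ω → ℝ := fun ω => ∑ y, |P y ω - Q y ω| with htS_def
  have he1int : Integrable e1 μ := integrable_finset_sum _
    (fun y _ => (hCWint y).indicator (hyhatSF y))
  have he2int : Integrable e2 μ := integrable_finset_sum _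
    (fun y _ => (hQint y).indicator (hgstarSF y))
  have htSint : Integrable tS μ := integrable_finset_sum _
    (fun y _ => ((hPint y).sub (hQint y)).abs)
  -- pointwise comparison
  have hcompare : ∀ᵐ ω ∂μ, e1 ω ≤ e2 ω + tS ω := by
    have hCPall : ∀ᵐ ω ∂μ, ∀ y : 𝒴, P y ω =
        (μ[Set.indicator {ω' | Y ω' = y} (fun _ => (1:ℝ)) | MeasurableSpace.comap
          W inferInstance]) ω := ae_all_iff.mpr (fun y => hCP y)
    filter_upwards [hCPall] with ω hω
    have hsum1 : e1 ω = (μ[Set.indicator {ω' | Y ω' = yhat ω} (fun _ => (1:ℝ))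
        | MeasurableSpace.comap W inferInstance]) ω := by
      simp only [he1_def]
      have : ∀ y : 𝒴, (yhat ⁻¹' {y}).indicator
          (μ[Set.indicator {ω' | Y ω' = y} (fun _ => (1:ℝ)) | MeasurableSpace.comap
            W inferInstance]) ω
          = if yhat ω = y then (μ[Set.indicator {ω' | Y ω' = y} (fun _ => (1:ℝ))
              | MeasurableSpace.comap W inferInstance]) ω else 0 := by
        intro y
        rw [Set.indicator_apply]
        congr 1
      rw [Finset.sum_congr rfl (fun y _ => this y), Finset.sum_ite_eq]
      simp
    have hsum2 : e2 ω = Q (gstar (V ω)) ω := by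
      simp only [he2_def]
      have : ∀ y : 𝒴, ((fun ω' => gstar (V ω')) ⁻¹' {y}).indicator (Q y) ω
          = if gstar (V ω) = y then Q y ω else 0 := by
        intro y
        rw [Set.indicator_apply]
        congr 1
      rw [Finset.sum_congr rfl (fun y _ => this y), Finset.sum_ite_eq]
      simp
    rw [hsum1, hsum2]
    have h1 : (μ[Set.indicator {ω' | Y ω' = yhat ω} (fun _ => (1:ℝ))
        | MeasurableSpace.comap W inferInstance]) ω = P (yhat ω) ω := (hω (yhat ω)).symm
    rw [h1]
    have h2 : P (yhat ω) ω ≤ Q (yhat ω) ω + |P (yhat ω) ω - Q (yhat ω) ω| := by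
      have := le_abs_self (P (yhat ω) ω - Q (yhat ω) ω)
      linarith
    have h3 : Q (yhat ω) ω ≤ Q (gstar (V ω)) ω := by
      simp only [hgstar_def, hQ_def]
      exact argmaxFin_spec (fun y => (condDistrib Y V μ (V ω) {y}).toReal) (yhat ω)
    have h4 : |P (yhat ω) ω - Q (yhat ω) ω| ≤ tS ω := by
      simp only [htS_def]
      exact Finset.single_le_sum (f := fun y => |P y ω - Q y ω|)
        (fun y _ => abs_nonneg _) (Finset.mem_univ (yhat ω))
    linarith
  have hInt12 : ∫ ω, e1 ω ∂μ ≤ ∫ ω, e2 ω ∂μ + ∫ ω, tS ω ∂μ := by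
    rw [← integral_add he2int htSint]
    exact integral_mono_ae he1int (he2int.add htSint) hcompare
  -- translate into the bound on the error probabilities
  have herr2 : μ {ω | Y ω ≠ gstar (V ω)} = 1 - ENNReal.ofReal (∫ ω, e2 ω ∂μ) := by
    have hcompl : {ω | Y ω ≠ gstar (V ω)} = {ω | Y ω = gstar (V ω)}ᶜ := rfl
    rw [hcompl, prob_compl_eq_one_sub hgstarCalc.1, hgstarCalc.2]
  have herr1 : μ {ω | Y ω ≠ yhat ω} = 1 - ENNReal.ofReal (∫ ω, e1 ω ∂μ) := by
    have hcompl : {ω | Y ω ≠ yhat ω} = {ω | Y ω = yhat ω}ᶜ := rfl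
    rw [hcompl, prob_compl_eq_one_sub hyhatCalc.1, hyhatCalc.2]
  have hkey1 : μ {ω | Y ω ≠ gstar (V ω)} ≤ μ {ω | Y ω ≠ yhat ω}
      + ENNReal.ofReal (∫ ω, tS ω ∂μ) := by
    rw [herr1, herr2]
    have h1 : ENNReal.ofReal (∫ ω, e1 ω ∂μ) ≤ ENNReal.ofReal (∫ ω, e2 ω ∂μ)
        + ENNReal.ofReal (∫ ω, tS ω ∂μ) :=
      le_trans (ENNReal.ofReal_le_ofReal hInt12) (ENNReal.ofReal_add_le)
    calc (1:ℝ≥0∞) - ENNReal.ofReal (∫ ω, e2 ω ∂μ)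
        ≤ (1 - (ENNReal.ofReal (∫ ω, e2 ω ∂μ) + ENNReal.ofReal (∫ ω, tS ω ∂μ)))
          + ENNReal.ofReal (∫ ω, tS ω ∂μ) := by
          rw [tsub_add_eq_tsub_tsub]
          exact le_tsub_add
      _ ≤ (1 - ENNReal.ofReal (∫ ω, e1 ω ∂μ)) + ENNReal.ofReal (∫ ω, tS ω ∂μ) :=
          add_le_add_left (tsub_le_tsub_left h1 1) _
  -- === stage 3: the KL chain ===
  set k1 : Ω → ℝ := fun ω => ∑ y, P y ω * Real.log (P y ω / Q y ω) with hk1_def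
  set k2 : Ω → ℝ := fun ω => ∑ y, Q y ω * Real.log (Q y ω / R y ω) with hk2_def
  set k3 : Ω → ℝ := fun ω => ∑ y, P y ω * Real.log (P y ω / R y ω) with hk3_def
  have hk1m : Measurable k1 := Finset.measurable_sum _
    (fun y _ => (hPm y).mul (((hPm y).div (hQm y)).log))
  have hk2m : Measurable k2 := Finset.measurable_sum _
    (fun y _ => (hQm y).mul (((hQm y).div (hRm y)).log))
  have hk3m : Measurable k3 := Finset.measurable_sum _
    (fun y _ => (hPm y).mul (((hPm y).div (hRm y)).log))
  -- identification of the two cmi quantities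
  have hcmiU : cmi μ Y (featTuple X Finset.univ) Ym = ∫⁻ ω, ENNReal.ofReal (k3 ω) ∂μ := by
    have hrfl : cmi μ Y (featTuple X Finset.univ) Ym
        = ∫⁻ ω, klDiv (condDistrib Y W μ (W ω)) (condDistrib Y Ym μ (Ym ω)) ∂μ := rfl
    rw [hrfl]
    apply lintegral_congr_ae
    filter_upwards [hacPR] with ω hω
    have hac : condDistrib Y W μ (W ω) ≪ condDistrib Y Ym μ (Ym ω) := by
      apply ac_of_singletons
      intro y hy
      have hR00 : R y ω = 0 := by rw [hR_def]; simp only [hy, ENNReal.toReal_zero]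
      have hP00 := hω y hR00
      rw [hP_def] at hP00
      simp only at hP00
      rw [ENNReal.toReal_eq_zero_iff] at hP00
      exact hP00.resolve_right (measure_ne_top _ _)
    rw [klDiv_fin_eq _ _ hac]
  have hcmiA : cmi μ Y (featTuple X A) Ym = ∫⁻ ω, ENNReal.ofReal (k2 ω) ∂μ := by
    have hrfl : cmi μ Y (featTuple X A) Ym
        = ∫⁻ ω, klDiv (condDistrib Y V μ (V ω)) (condDistrib Y Ym μ (Ym ω)) ∂μ := rfl
    rw [hrfl]
    apply lintegral_congr_ae
    filter_upwards [hacQR] with ω hω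
    have hac : condDistrib Y V μ (V ω) ≪ condDistrib Y Ym μ (Ym ω) := by
      apply ac_of_singletons
      intro y hy
      have hR00 : R y ω = 0 := by rw [hR_def]; simp only [hy, ENNReal.toReal_zero]
      have hQ00 := hω y hR00
      rw [hQ_def] at hQ00
      simp only at hQ00
      rw [ENNReal.toReal_eq_zero_iff] at hQ00
      exact hQ00.resolve_right (measure_ne_top _ _)
    rw [klDiv_fin_eq _ _ hac]
  -- final goal reduction
  have hfinal : ENNReal.ofReal (∫ ω, tS ω ∂μ)
      ≤ (2 * cmi μ Y (featTuple X Finset.univ) Ym - ENNReal.ofReal (Δ ^ 2)) ^ (2⁻¹ : ℝ) := by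
    by_cases htop : cmi μ Y (featTuple X Finset.univ) Ym = ⊤
    · rw [htop]
      have h2top : (2:ℝ≥0∞) * ⊤ - ENNReal.ofReal (Δ^2) = ⊤ := by
        rw [ENNReal.mul_top (by norm_num)]
        exact ENNReal.top_sub ENNReal.ofReal_ne_top
      rw [h2top, ENNReal.top_rpow_of_pos (by norm_num)]
      exact le_top
    -- a.e. nonnegativity and the Pinsker bound
    have hpinsk1 : ∀ᵐ ω ∂μ, (tS ω)^2 / 2 ≤ k1 ω := by
      filter_upwards [hacPQ] with ω hω
      have := pinsker_fin (fun y => P y ω) (fun y => Q y ω)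
        (fun y => hP0 y ω) (fun y => hQ0 y ω) (hPsum ω) (hQsum ω) hω
      simpa [htS_def, hk1_def] using this
    have hk1nn : ∀ᵐ ω ∂μ, 0 ≤ k1 ω := by
      filter_upwards [hpinsk1] with ω hω
      have h0 : 0 ≤ (tS ω)^2/2 := by positivity
      linarith
    have hk2nn : ∀ᵐ ω ∂μ, 0 ≤ k2 ω := by
      filter_upwards [hacQR] with ω hω
      have := pinsker_fin (fun y => Q y ω) (fun y => R y ω)
        (fun y => hQ0 y ω) (fun y => hR0 y ω) (hQsum ω) (hRsum ω) hω
      have h0 : 0 ≤ (∑ y, |Q y ω - R y ω|)^2/2 := by positivity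
      simp only [hk2_def]
      linarith
    have hk3nn : ∀ᵐ ω ∂μ, 0 ≤ k3 ω := by
      filter_upwards [hacPR] with ω hω
      have := pinsker_fin (fun y => P y ω) (fun y => R y ω)
        (fun y => hP0 y ω) (fun y => hR0 y ω) (hPsum ω) (hRsum ω) hω
      have h0 : 0 ≤ (∑ y, |P y ω - R y ω|)^2/2 := by positivity
      simp only [hk3_def]
      linarith
    -- the positive and negative parts of log(Q/R)
    set Lp : 𝒴 → Ω → ℝ := fun y ω => max (Real.log (Q y ω / R y ω)) 0 with hLp_def
    set Lm : 𝒴 → Ω → ℝ := fun y ω => max (-Real.log (Q y ω / R y ω)) 0 with hLm_def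
    have hLp0 : ∀ y ω, 0 ≤ Lp y ω := fun y ω => le_max_right _ _
    have hLm0 : ∀ y ω, 0 ≤ Lm y ω := fun y ω => le_max_right _ _
    have hLpmV : ∀ y, Measurable[MeasurableSpace.comap V inferInstance]
        (fun ω => ENNReal.ofReal (Lp y ω)) := fun y =>
      ((((hQmV y).div ((hRmZ y).mono hmZV le_rfl)).log).max measurable_const).ennreal_ofReal
    have hLmmV : ∀ y, Measurable[MeasurableSpace.comap V inferInstance]
        (fun ω => ENNReal.ofReal (Lm y ω)) := fun y =>
      (((((hQmV y).div ((hRmZ y).mono hmZV le_rfl)).log).neg.max measurable_const)).ennreal_ofReal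
    -- tower identities
    have hTp : ∀ y, ∫⁻ ω, ENNReal.ofReal (P y ω * Lp y ω) ∂μ
        = ∫⁻ ω, ENNReal.ofReal (Q y ω * Lp y ω) ∂μ := by
      intro y
      have e1' : ∀ ω, ENNReal.ofReal (P y ω * Lp y ω)
          = ENNReal.ofReal (P y ω) * ENNReal.ofReal (Lp y ω) := fun ω =>
        ENNReal.ofReal_mul (hP0 y ω)
      have e2' : ∀ ω, ENNReal.ofReal (Q y ω * Lp y ω)
          = ENNReal.ofReal (Q y ω) * ENNReal.ofReal (Lp y ω) := fun ω =>
        ENNReal.ofReal_mul (hQ0 y ω)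
      rw [lintegral_congr e1', lintegral_congr e2']
      exact towerPQ y _ (hLpmV y)
    have hTm : ∀ y, ∫⁻ ω, ENNReal.ofReal (P y ω * Lm y ω) ∂μ
        = ∫⁻ ω, ENNReal.ofReal (Q y ω * Lm y ω) ∂μ := by
      intro y
      have e1' : ∀ ω, ENNReal.ofReal (P y ω * Lm y ω)
          = ENNReal.ofReal (P y ω) * ENNReal.ofReal (Lm y ω) := fun ω =>
        ENNReal.ofReal_mul (hP0 y ω)
      have e2' : ∀ ω, ENNReal.ofReal (Q y ω * Lm y ω)
          = ENNReal.ofReal (Q y ω) * ENNReal.ofReal (Lm y ω) := fun ω =>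
        ENNReal.ofReal_mul (hQ0 y ω)
      rw [lintegral_congr e1', lintegral_congr e2']
      exact towerPQ y _ (hLmmV y)
    -- abbreviations for the lintegral quantities
    set X1 := ∫⁻ ω, ENNReal.ofReal (k1 ω) ∂μ with hX1_def
    set X2 := ∫⁻ ω, ENNReal.ofReal (k2 ω) ∂μ with hX2_def
    set X3 := ∫⁻ ω, ENNReal.ofReal (k3 ω) ∂μ with hX3_def
    set Aq := ∑ y : 𝒴, ∫⁻ ω, ENNReal.ofReal (Q y ω * Lp y ω) ∂μ with hAq_def
    set Bq := ∑ y : 𝒴, ∫⁻ ω, ENNReal.ofReal (Q y ω * Lm y ω) ∂μ with hBq_def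
    -- max-identity
    have hmaxid : ∀ x : ℝ, max x 0 - max (-x) 0 = x := by
      intro x
      rcases le_total 0 x with h | h
      · rw [max_eq_left h, max_eq_right (by linarith)]; ring
      · rw [max_eq_right h, max_eq_left (by linarith)]; ring
    -- pointwise identity (a.e.): k1 + Σ P·Lp = k3 + Σ P·Lm
    have hiden : ∀ᵐ ω ∂μ, k1 ω + ∑ y, P y ω * Lp y ω = k3 ω + ∑ y, P y ω * Lm y ω := by
      filter_upwards [hacPQ, hacQR] with ω h1 h2
      simp only [hk1_def, hk3_def]
      rw [← Finset.sum_add_distrib, ← Finset.sum_add_distrib]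
      apply Finset.sum_congr rfl
      intro y _
      by_cases hPy : P y ω = 0
      · rw [hPy]; ring
      · have hQy : Q y ω ≠ 0 := fun h => hPy (h1 y h)
        have hRy : R y ω ≠ 0 := fun h => hQy (h2 y h)
        have hgl : Real.log (P y ω / Q y ω) + (Lp y ω - Lm y ω)
            = Real.log (P y ω / R y ω) := by
          rw [hLp_def, hLm_def]
          simp only
          rw [hmaxid]
          rw [Real.log_div hPy hQy, Real.log_div hQy hRy, Real.log_div hPy hRy]
          ring
        linear_combination (P y ω) * hgl
    -- equation 1 : X1 + Σ ∫ P·Lp = X3 + Σ ∫ P·Lm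
    have heq1 : X1 + Aq = X3 + Bq := by
      rw [hAq_def, hBq_def]
      rw [← Finset.sum_congr rfl (fun y _ => hTp y), ← Finset.sum_congr rfl (fun y _ => hTm y)]
      rw [hX1_def, hX3_def]
      rw [← lintegral_finset_sum _ (fun y _ =>
        show Measurable (fun ω => ENNReal.ofReal (P y ω * Lp y ω)) from
        ((hPm y).mul (((((hQm y).div (hRm y)).log).max measurable_const))).ennreal_ofReal),
        ← lintegral_finset_sum _ (fun y _ =>
        show Measurable (fun ω => ENNReal.ofReal (P y ω * Lm y ω)) from
        ((hPm y).mul ((((((hQm y).div (hRm y)).log).neg).max measurable_const))).ennreal_ofReal)]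
      rw [← lintegral_add_left (hk1m.ennreal_ofReal), ← lintegral_add_left (hk3m.ennreal_ofReal)]
      apply lintegral_congr_ae
      filter_upwards [hiden, hk1nn, hk3nn] with ω hid h1nn h3nn
      have hsplit1 : ENNReal.ofReal (k1 ω) + ∑ y, ENNReal.ofReal (P y ω * Lp y ω)
          = ENNReal.ofReal (k1 ω + ∑ y, P y ω * Lp y ω) := by
        rw [ENNReal.ofReal_add h1nn (Finset.sum_nonneg (fun y _ =>
          mul_nonneg (hP0 y ω) (hLp0 y ω))),
          ENNReal.ofReal_sum_of_nonneg (fun y _ => mul_nonneg (hP0 y ω) (hLp0 y ω))]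
      have hsplit2 : ENNReal.ofReal (k3 ω) + ∑ y, ENNReal.ofReal (P y ω * Lm y ω)
          = ENNReal.ofReal (k3 ω + ∑ y, P y ω * Lm y ω) := by
        rw [ENNReal.ofReal_add h3nn (Finset.sum_nonneg (fun y _ =>
          mul_nonneg (hP0 y ω) (hLm0 y ω))),
          ENNReal.ofReal_sum_of_nonneg (fun y _ => mul_nonneg (hP0 y ω) (hLm0 y ω))]
      rw [hsplit1, hsplit2, hid]
    -- equation 2 : X2 + Bq = Aq
    have heq2 : X2 + Bq = Aq := by
      rw [hAq_def, hBq_def, hX2_def]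
      rw [← lintegral_finset_sum _ (fun y _ =>
        show Measurable (fun ω => ENNReal.ofReal (Q y ω * Lp y ω)) from
        ((hQm y).mul (((((hQm y).div (hRm y)).log).max measurable_const))).ennreal_ofReal),
        ← lintegral_finset_sum _ (fun y _ =>
        show Measurable (fun ω => ENNReal.ofReal (Q y ω * Lm y ω)) from
        ((hQm y).mul ((((((hQm y).div (hRm y)).log).neg).max measurable_const))).ennreal_ofReal)]
      rw [← lintegral_add_left (hk2m.ennreal_ofReal)]
      apply lintegral_congr_ae
      filter_upwards [hk2nn] with ω h2nn
      have hsplit1 : ENNReal.ofReal (k2 ω) + ∑ y, ENNReal.ofReal (Q y ω * Lm y ω)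
          = ENNReal.ofReal (k2 ω + ∑ y, Q y ω * Lm y ω) := by
        rw [ENNReal.ofReal_add h2nn (Finset.sum_nonneg (fun y _ =>
          mul_nonneg (hQ0 y ω) (hLm0 y ω))),
          ENNReal.ofReal_sum_of_nonneg (fun y _ => mul_nonneg (hQ0 y ω) (hLm0 y ω))]
      have hsplit2 : (∑ y, ENNReal.ofReal (Q y ω * Lp y ω))
          = ENNReal.ofReal (∑ y, Q y ω * Lp y ω) := by
        rw [ENNReal.ofReal_sum_of_nonneg (fun y _ => mul_nonneg (hQ0 y ω) (hLp0 y ω))]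
      rw [hsplit1, hsplit2]
      congr 1
      have hterm2 : ∀ y : 𝒴, Q y ω * Real.log (Q y ω / R y ω) + Q y ω * Lm y ω
          = Q y ω * Lp y ω := by
        intro y
        have hmx := hmaxid (Real.log (Q y ω / R y ω))
        simp only [hLp_def, hLm_def]
        linear_combination (-(Q y ω)) * hmx
      rw [hk2_def]
      simp only
      rw [← Finset.sum_add_distrib]
      exact Finset.sum_congr rfl (fun y _ => hterm2 y)
    -- Bq is finite
    have hpointB : ∀ (y : 𝒴) (ω : Ω), Q y ω * Lm y ω ≤ R y ω := by
      intro y ω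
      rcases eq_or_lt_of_le (hQ0 y ω) with hQz | hQpos
      · rw [← hQz, zero_mul]; exact hR0 y ω
      rcases eq_or_lt_of_le (hR0 y ω) with hRz | hRpos
      · rw [hLm_def]
        simp only
        rw [← hRz, div_zero, Real.log_zero, neg_zero, max_self, mul_zero]
      · have h1 : -Real.log (Q y ω / R y ω) = Real.log (R y ω / Q y ω) := by
          rw [← Real.log_inv]
          congr 1
          field_simp
        rw [hLm_def]
        simp only [h1]
        rcases le_total (Real.log (R y ω / Q y ω)) 0 with h2 | h2
        · rw [max_eq_right h2, mul_zero]; exact (hR0 y ω)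
        · rw [max_eq_left h2]
          have h3 : Real.log (R y ω / Q y ω) ≤ R y ω / Q y ω - 1 :=
            Real.log_le_sub_one_of_pos (by positivity)
          have h4 : Q y ω * Real.log (R y ω / Q y ω) ≤ Q y ω * (R y ω / Q y ω - 1) :=
            mul_le_mul_of_nonneg_left h3 hQpos.le
          have h5 : Q y ω * (R y ω / Q y ω - 1) = R y ω - Q y ω := by
            field_simp
          linarith
    have hBfin : Bq ≠ ⊤ := by
      rw [hBq_def]
      apply ne_of_lt
      apply ENNReal.sum_lt_top.mpr
      intro y _
      apply lt_of_le_of_lt (lintegral_mono (fun ω =>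
        ENNReal.ofReal_le_ofReal (hpointB y ω)))
      apply lt_of_le_of_lt (lintegral_mono (fun ω =>
        ENNReal.ofReal_le_ofReal (hR1 y ω)))
      simp [lintegral_const]
    -- X1 + X2 = X3
    have hsum123 : X1 + X2 = X3 := by
      have h1 : X1 + (X2 + Bq) = X3 + Bq := by rw [heq2, heq1]
      rw [← add_assoc] at h1
      exact WithTop.add_right_cancel hBfin h1
    have hX3ne : X3 ≠ ⊤ := by rw [← hcmiU]; exact htop
    have hX1ne : X1 ≠ ⊤ := by
      intro h
      apply hX3ne
      rw [← hsum123, h, top_add]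
    -- integrability of k1 and the value of its integral
    have hk1int : Integrable k1 μ := by
      have h1 : Integrable (fun ω => (ENNReal.ofReal (k1 ω)).toReal) μ :=
        integrable_toReal_of_lintegral_ne_top hk1m.ennreal_ofReal.aemeasurable hX1ne
      apply h1.congr
      filter_upwards [hk1nn] with ω hω
      rw [ENNReal.toReal_ofReal hω]
    have hintk1 : ∫ ω, k1 ω ∂μ = X1.toReal := by
      rw [integral_eq_lintegral_of_nonneg_ae hk1nn hk1m.aestronglyMeasurable, hX1_def]
    -- Cauchy–Schwarz step
    have htS0 : ∀ ω, 0 ≤ tS ω := fun ω => Finset.sum_nonneg (fun y _ => abs_nonneg _)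
    have htSm : Measurable tS := Finset.measurable_sum _
      (fun y _ => ((hPm y).sub (hQm y)).abs)
    have htSbd : ∀ ω, tS ω ≤ (Fintype.card 𝒴 : ℝ) := by
      intro ω
      simp only [htS_def]
      calc ∑ y, |P y ω - Q y ω| ≤ ∑ y : 𝒴, (1:ℝ) := Finset.sum_le_sum (fun y _ => by
            rw [abs_le]
            constructor <;> nlinarith [hP0 y ω, hP1 y ω, hQ0 y ω, hQ1 y ω])
        _ = (Fintype.card 𝒴 : ℝ) := by rw [Finset.sum_const, Finset.card_univ]; simp
    have htS2int : Integrable (fun ω => (tS ω)^2) μ := by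
      apply Integrable.mono' (integrable_const ((Fintype.card 𝒴 : ℝ)^2))
        (htSm.pow_const 2).aestronglyMeasurable
      apply Filter.Eventually.of_forall
      intro ω
      rw [Real.norm_eq_abs, abs_of_nonneg (sq_nonneg _)]
      have := htSbd ω
      have := htS0 ω
      nlinarith
    have hCS : (∫ ω, tS ω ∂μ)^2 ≤ ∫ ω, (tS ω)^2 ∂μ := by
      set c := ∫ ω, tS ω ∂μ with hc_def
      have hint2 : Integrable (fun ω => (tS ω)^2 - (2*c)*tS ω) μ :=
        htS2int.sub (htSint.const_mul (2*c))
      have hvar : 0 ≤ ∫ ω, ((tS ω)^2 - (2*c)*tS ω + c^2) ∂μ := by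
        have hre : (fun ω => (tS ω)^2 - (2*c)*tS ω + c^2) = fun ω => (tS ω - c)^2 := by
          funext ω; ring
        rw [hre]
        exact integral_nonneg (fun ω => sq_nonneg _)
      rw [integral_add hint2 (integrable_const _),
        integral_sub htS2int (htSint.const_mul (2*c)), integral_const_mul,
        integral_const] at hvar
      simp only [measure_univ, ENNReal.toReal_one, smul_eq_mul, one_mul, probReal_univ] at hvar
      nlinarith [hvar]
    have htSk1 : ∫ ω, (tS ω)^2 ∂μ ≤ 2 * ∫ ω, k1 ω ∂μ := by
      rw [← integral_const_mul]
      apply integral_mono_ae htS2int (hk1int.const_mul 2)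
      filter_upwards [hpinsk1] with ω hω
      linarith
    -- assemble in ℝ≥0∞
    have hX2ge : ENNReal.ofReal (Δ^2/2) ≤ X2 := by rw [← hcmiA]; exact hA
    have h2X1 : 2 * X1 ≤ 2 * X3 - ENNReal.ofReal (Δ^2) := by
      apply ENNReal.le_sub_of_add_le_right ENNReal.ofReal_ne_top
      have hΔ : ENNReal.ofReal (Δ^2) = 2 * ENNReal.ofReal (Δ^2/2) := by
        rw [← ENNReal.ofReal_ofNat, ← ENNReal.ofReal_mul (by norm_num)]
        congr 1
        ring
      rw [hΔ]
      calc 2*X1 + 2*ENNReal.ofReal (Δ^2/2) ≤ 2*X1 + 2*X2 := by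
            exact add_le_add le_rfl (mul_le_mul_right hX2ge 2)
        _ = 2*(X1+X2) := by ring
        _ = 2*X3 := by rw [hsum123]
    have hsq : (ENNReal.ofReal (∫ ω, tS ω ∂μ))^(2:ℝ) ≤ 2 * X3 - ENNReal.ofReal (Δ^2) := by
      have e0 : (ENNReal.ofReal (∫ ω, tS ω ∂μ))^(2:ℝ)
          = ENNReal.ofReal ((∫ ω, tS ω ∂μ)^2) := by
        rw [show ((2:ℝ)) = ((2:ℕ):ℝ) by norm_num, ENNReal.rpow_natCast,
          ENNReal.ofReal_pow (integral_nonneg htS0)]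
      rw [e0]
      calc ENNReal.ofReal ((∫ ω, tS ω ∂μ)^2)
          ≤ ENNReal.ofReal (2 * ∫ ω, k1 ω ∂μ) :=
            ENNReal.ofReal_le_ofReal (le_trans hCS htSk1)
        _ = 2 * ENNReal.ofReal (∫ ω, k1 ω ∂μ) := by
            rw [ENNReal.ofReal_mul (by norm_num), ENNReal.ofReal_ofNat]
        _ = 2 * X1 := by rw [hintk1, ENNReal.ofReal_toReal hX1ne]
        _ ≤ 2 * X3 - ENNReal.ofReal (Δ^2) := h2X1
    calc ENNReal.ofReal (∫ ω, tS ω ∂μ)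
        = ((ENNReal.ofReal (∫ ω, tS ω ∂μ))^(2:ℝ))^(2⁻¹:ℝ) := by
          rw [← ENNReal.rpow_mul]
          norm_num
      _ ≤ (2 * X3 - ENNReal.ofReal (Δ^2))^(2⁻¹:ℝ) :=
          ENNReal.rpow_le_rpow hsq (by norm_num)
      _ = (2 * cmi μ Y (featTuple X Finset.univ) Ym - ENNReal.ofReal (Δ^2))^(2⁻¹:ℝ) := by
          rw [hcmiU]
  -- === conclusion ===
  have hiInf : (⨅ g : {g : ((i : A) → Fin (d i.1) → ℝ) × (Fin dY → ℝ) → 𝒴 // Measurable g},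
      μ {ω | Y ω ≠ g.1 (featTuple X A ω, Ym ω)}) ≤ μ {ω | Y ω ≠ gstar (V ω)} :=
    iInf_le (fun g : {g : ((i : A) → Fin (d i.1) → ℝ) × (Fin dY → ℝ) → 𝒴 // Measurable g} =>
      μ {ω | Y ω ≠ g.1 (featTuple X A ω, Ym ω)}) ⟨gstar, hgstarMeas⟩
  exact le_trans hiInf (le_trans hkey1 (add_le_add (le_refl _) hfinal))
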